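/- The function u(x₁,x₂) = x₁/(x₁² + x₂²) on the half-plane H² satisfies the minimal surface equation for H² × ℝ: x₂² Δ₀u · (1 + x₂²|D₀u|₀²) - x₂²(x₂ u_{x₂} |D₀u|₀² + x₂² Q(u)) = 0. -/

import Mathlib

/-- Euclidean partial derivative with respect to the first variable. -/
noncomputable def pd1 (f : ℝ → ℝ → ℝ) (x y : ℝ) : ℝ := deriv (fun t => f t y) x

/-- Euclidean partial derivative with respect to the second variable. -/
noncomputable def pd2 (f : ℝ → ℝ → ℝ) (x y : ℝ) : ℝ := deriv (fun t => f x t) y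

open Filter Topology

lemma hu1 (x y : ℝ) (h : x^2+y^2 ≠ 0) :
    HasDerivAt (fun t => t/(t^2+y^2)) ((y^2-x^2)/(x^2+y^2)^2) x := by
  have := (hasDerivAt_id x).div ((hasDerivAt_pow 2 x).add_const (y^2)) h
  refine this.congr_deriv ?_
  simp only [id]
  field_simp
  ring

lemma hu2 (x y : ℝ) (h : x^2+y^2 ≠ 0) :
    HasDerivAt (fun t => x/(x^2+t^2)) (-(2*x*y)/(x^2+y^2)^2) y := by
  have := (hasDerivAt_const y x).div (((hasDerivAt_pow 2 y).const_add (x^2))) h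
  refine this.congr_deriv ?_
  field_simp
  ring

lemma h11 (x y : ℝ) (h : x^2+y^2 ≠ 0) :
    HasDerivAt (fun t => (y^2-t^2)/((t^2+y^2)^2))
      ((2*x^3-6*x*y^2)/(x^2+y^2)^3) x := by
  have hg : HasDerivAt (fun t : ℝ => (t^2+y^2)^2) (2*(x^2+y^2)*(2*x)) x := by
    have := (((hasDerivAt_pow 2 x).add_const (y^2)).pow 2)
    refine this.congr_deriv ?_
    ring
  have hf : HasDerivAt (fun t : ℝ => y^2-t^2) (-(2*x)) x := by
    have := ((hasDerivAt_pow 2 x).const_sub (y^2))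
    refine this.congr_deriv ?_
    ring
  have := hf.div hg (pow_ne_zero 2 h)
  refine this.congr_deriv ?_
  field_simp
  ring

lemma h21 (x y : ℝ) (h : x^2+y^2 ≠ 0) :
    HasDerivAt (fun t => (t^2-x^2)/((x^2+t^2)^2))
      ((6*x^2*y-2*y^3)/(x^2+y^2)^3) y := by
  have hg : HasDerivAt (fun t : ℝ => (x^2+t^2)^2) (2*(x^2+y^2)*(2*y)) y := by
    have := (((hasDerivAt_pow 2 y).const_add (x^2)).pow 2)
    refine this.congr_deriv ?_
    ring
  have hf : HasDerivAt (fun t : ℝ => t^2-x^2) (2*y) y := by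
    have := ((hasDerivAt_pow 2 y).sub_const (x^2))
    refine this.congr_deriv ?_
    ring
  have := hf.div hg (pow_ne_zero 2 h)
  refine this.congr_deriv ?_
  field_simp
  ring

lemma h22 (x y : ℝ) (h : x^2+y^2 ≠ 0) :
    HasDerivAt (fun t => -(2*x*t)/((x^2+t^2)^2))
      ((6*x*y^2-2*x^3)/(x^2+y^2)^3) y := by
  have hg : HasDerivAt (fun t : ℝ => (x^2+t^2)^2) (2*(x^2+y^2)*(2*y)) y := by
    have := (((hasDerivAt_pow 2 y).const_add (x^2)).pow 2)
    refine this.congr_deriv ?_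
    ring
  have hf : HasDerivAt (fun t : ℝ => -(2*x*t)) (-(2*x)) y := by
    exact ((hasDerivAt_id y).const_mul (2*x)).neg.congr_deriv (by simp)
  have := hf.div hg (pow_ne_zero 2 h)
  refine this.congr_deriv ?_
  field_simp
  ring

/-- The function u(x₁,x₂) = x₁/(x₁²+x₂²) satisfies the minimal surface equation for
H²×ℝ on the upper half-plane:
x₂²Δ₀u(1+x₂²|D₀u|₀²) - x₂²(x₂u_{x₂}|D₀u|₀² + x₂²Q(u)) = 0. -/
theorem stmt2 :
    ∀ x y : ℝ, 0 < y →
      (fun u : ℝ → ℝ → ℝ =>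
        y ^ 2 * (pd1 (pd1 u) x y + pd2 (pd2 u) x y) *
            (1 + y ^ 2 * ((pd1 u x y) ^ 2 + (pd2 u x y) ^ 2)) -
          y ^ 2 * (y * pd2 u x y * ((pd1 u x y) ^ 2 + (pd2 u x y) ^ 2) +
            y ^ 2 * ((pd1 u x y) ^ 2 * pd1 (pd1 u) x y +
              2 * pd1 u x y * pd2 u x y * pd2 (pd1 u) x y +
              (pd2 u x y) ^ 2 * pd2 (pd2 u) x y)))
        (fun x₁ x₂ => x₁ / (x₁ ^ 2 + x₂ ^ 2)) = 0 := by
  intro x y hy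
  set u : ℝ → ℝ → ℝ := fun x₁ x₂ => x₁ / (x₁ ^ 2 + x₂ ^ 2) with hu
  have hne : ∀ a b : ℝ, 0 < b → a^2 + b^2 ≠ 0 := fun a b hb => by positivity
  have h0 : x^2 + y^2 ≠ 0 := hne x y hy
  -- first derivatives
  have e1 : ∀ a b : ℝ, a^2+b^2 ≠ 0 → pd1 u a b = (b^2-a^2)/(a^2+b^2)^2 := by
    intro a b h; exact (hu1 a b h).deriv
  have e2 : ∀ a b : ℝ, a^2+b^2 ≠ 0 → pd2 u a b = -(2*a*b)/(a^2+b^2)^2 := by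
    intro a b h; exact (hu2 a b h).deriv
  -- pd1 (pd1 u)
  have hy0 : y ≠ 0 := ne_of_gt hy
  have f11 : pd1 (pd1 u) x y = (2*x^3-6*x*y^2)/(x^2+y^2)^3 := by
    have : (fun t => pd1 u t y) = fun t => (y^2-t^2)/((t^2+y^2)^2) := by
      funext t; exact e1 t y (hne t y hy)
    rw [pd1, this]
    exact (h11 x y h0).deriv
  -- eventually nonzero near y
  have hev : ∀ᶠ t in 𝓝 y, x^2 + t^2 ≠ 0 := by
    have : ContinuousAt (fun t : ℝ => x^2 + t^2) y := by fun_prop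
    exact this.eventually_ne h0
  have f21 : pd2 (pd1 u) x y = (6*x^2*y-2*y^3)/(x^2+y^2)^3 := by
    have heq : (fun t => pd1 u x t) =ᶠ[𝓝 y] fun t => (t^2-x^2)/((x^2+t^2)^2) := by
      filter_upwards [hev] with t ht
      rw [e1 x t ht]
    rw [pd2, heq.deriv_eq]
    exact (h21 x y h0).deriv
  have f22 : pd2 (pd2 u) x y = (6*x*y^2-2*x^3)/(x^2+y^2)^3 := by
    have heq : (fun t => pd2 u x t) =ᶠ[𝓝 y] fun t => -(2*x*t)/((x^2+t^2)^2) := by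
      filter_upwards [hev] with t ht
      rw [e2 x t ht]
    rw [pd2, heq.deriv_eq]
    exact (h22 x y h0).deriv
  simp only [e1 x y h0, e2 x y h0, f11, f21, f22]
  field_simp
  ring
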